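/- Let X be a subset of a real normed vector space, Z a set, z_1,…,z_N ∈ Z, ℓ : X × Z → ℝ, R : X → ℝ, λ > 0, and β ≥ 0. Define the regularized empirical loss L_N(x) = (1/N) Σ_{i=1}^{N} ℓ(x, z_i) + λ R(x) and, for a fixed index j ∈ {1,…,N}, the leave-one-out loss L_N^{\j}(x) = (1/N) Σ_{i≠j} ℓ(x, z_i) + λ R(x). Assume ℓ is β-Lipschitz in its first argument: |ℓ(x, z) − ℓ(x′, z)| ≤ β ‖x − x′‖ for all x, x′ ∈ X and z ∈ Z. Suppose x* minimizes L_N over X, x^{*\j} minimizes L_N^{\j} over X, and the quadratic growth condition λ ‖x* − x‖² ≤ L_N(x) − L_N(x*) holds for all x ∈ X. Then ‖x* − x^{*\j}‖ ≤ β/(λ N). -/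

import Mathlib

/-- Stability of regularized ERM under quadratic growth: the minimizers of the full
and leave-one-out regularized empirical losses are at distance at most `β / (λ N)`. -/
theorem regularized_erm_minimizer_stability {E : Type*} [NormedAddCommGroup E]
    [NormedSpace ℝ E] {Z : Type*} (X : Set E) (N : ℕ) (hN : 1 ≤ N) (zs : Fin N → Z)
    (ℓ : E → Z → ℝ) (R : E → ℝ) (lam β : ℝ) (hlam : 0 < lam) (hβ : 0 ≤ β)
    (j : Fin N) (LN LNj : E → ℝ)
    (hLN : ∀ x, LN x = (1 / (N : ℝ)) * ∑ i, ℓ x (zs i) + lam * R x)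
    (hLNj : ∀ x, LNj x =
      (1 / (N : ℝ)) * ∑ i ∈ Finset.univ.erase j, ℓ x (zs i) + lam * R x)
    (hlip : ∀ zz : Z, ∀ x ∈ X, ∀ x' ∈ X, |ℓ x zz - ℓ x' zz| ≤ β * ‖x - x'‖)
    (xstar : E) (hxstar : xstar ∈ X) (hxstarmin : ∀ x ∈ X, LN xstar ≤ LN x)
    (xj : E) (hxj : xj ∈ X) (hxjmin : ∀ x ∈ X, LNj xj ≤ LNj x)
    (hqg : ∀ x ∈ X, lam * ‖xstar - x‖ ^ 2 ≤ LN x - LN xstar) :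
    ‖xstar - xj‖ ≤ β / (lam * N) := by
  have hNpos : (0:ℝ) < N := by exact_mod_cast hN
  -- relation LN x = LNj x + (1/N) * ℓ x (zs j)
  have hrel : ∀ x, LN x = LNj x + (1 / (N:ℝ)) * ℓ x (zs j) := by
    intro x
    rw [hLN, hLNj]
    have := Finset.sum_erase_add Finset.univ (fun i => ℓ x (zs i)) (Finset.mem_univ j)
    rw [← this]
    ring
  set d := ‖xstar - xj‖ with hd
  have hd0 : 0 ≤ d := norm_nonneg _
  have key : lam * d ^ 2 ≤ (β / N) * d := by
    have h1 : lam * d ^ 2 ≤ LN xj - LN xstar := hqg xj hxj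
    have h2 : LNj xj ≤ LNj xstar := hxjmin xstar hxstar
    have h3 : LN xj - LN xstar ≤ (1 / (N:ℝ)) * (ℓ xj (zs j) - ℓ xstar (zs j)) := by
      rw [hrel xj, hrel xstar]; linarith
    have h4 : ℓ xj (zs j) - ℓ xstar (zs j) ≤ β * d := by
      have := hlip (zs j) xj hxj xstar hxstar
      have hrev : ‖xj - xstar‖ = d := by rw [hd, norm_sub_rev]
      rw [hrev] at this
      exact (abs_le.mp this).2
    have h5 : (1 / (N:ℝ)) * (ℓ xj (zs j) - ℓ xstar (zs j)) ≤ (β / N) * d := by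
      have h6 := mul_le_mul_of_nonneg_left h4 (by positivity : (0:ℝ) ≤ 1 / N)
      calc (1 / (N:ℝ)) * (ℓ xj (zs j) - ℓ xstar (zs j)) ≤ (1 / N) * (β * d) := h6
        _ = (β / N) * d := by ring
    linarith
  rcases eq_or_lt_of_le hd0 with h0 | hpos
  · rw [← h0]
    positivity
  · have : lam * d ≤ β / N := by
      have := mul_le_mul_of_nonneg_right key (le_of_lt (inv_pos.mpr hpos))
      calc lam * d = lam * d ^ 2 * d⁻¹ := by field_simp
        _ ≤ (β / N) * d * d⁻¹ := this
        _ = β / N := by field_simp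
    rw [le_div_iff₀ (mul_pos hlam hNpos)]
    have h6 := (le_div_iff₀ hNpos).mp this
    calc d * (lam * ↑N) = lam * d * ↑N := by ring
      _ ≤ β := h6
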